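/- Let w be a primitive C'-adic word with directive sequence (τ_n) ∈ C'^ℕ. Then the extension set of the empty word, E(ε,w) = {(a,b) ∈ A×A : the two-letter word ab is a factor of w}, equals: {(1,1),(1,2),(1,3),(2,1),(3,1)} if τ_0 = c11; {(1,3),(2,3),(3,1),(3,2),(3,3)} if τ_0 = c22; {(1,2),(1,3),(2,1),(2,2),(3,2)} if τ_0 = c122; {(1,3),(2,1),(2,2),(2,3),(3,2)} if τ_0 = c211; {(1,2),(1,3),(2,1),(3,1),(3,2)} if τ_0 = c121; {(1,3),(2,1),(2,3),(3,1),(3,2)} if τ_0 = c212. -/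

import Mathlib

/-- Letters `0, 1, 2` stand for the letters `1, 2, 3` of the paper. -/
abbrev Letter := Fin 3

/-- A finite word over the alphabet `{1,2,3}`. -/
abbrev Word := List Letter

/-- Apply a substitution (given by its values on letters) to a finite word. -/
def applySub (σ : Letter → Word) (w : Word) : Word := (w.map σ).flatten

/-- `c11 = c₁² : 1 ↦ 1, 2 ↦ 12, 3 ↦ 13`. -/
def c11 : Letter → Word := ![[0], [0, 1], [0, 2]]

/-- `c22 = c₂² : 1 ↦ 13, 2 ↦ 23, 3 ↦ 3`. -/
def c22 : Letter → Word := ![[0, 2], [1, 2], [2]]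

/-- `c122 = c₁c₂² : 1 ↦ 12, 2 ↦ 132, 3 ↦ 2`. -/
def c122 : Letter → Word := ![[0, 1], [0, 2, 1], [1]]

/-- `c211 = c₂c₁² : 1 ↦ 2, 2 ↦ 213, 3 ↦ 23`. -/
def c211 : Letter → Word := ![[1], [1, 0, 2], [1, 2]]

/-- `c121 = c₁c₂c₁ : 1 ↦ 13, 2 ↦ 132, 3 ↦ 12`. -/
def c121 : Letter → Word := ![[0, 2], [0, 2, 1], [0, 1]]

/-- `c212 = c₂c₁c₂ : 1 ↦ 23, 2 ↦ 213, 3 ↦ 13`. -/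
def c212 : Letter → Word := ![[1, 2], [1, 0, 2], [0, 2]]

/-- The set of substitutions `C'`. -/
def Cprime : Set (Letter → Word) := {c11, c22, c122, c211, c121, c212}

/-- `comps τ r k` is the composition `τ_r ∘ τ_{r+1} ∘ ⋯ ∘ τ_{r+k-1}` acting on words. -/
def comps (τ : ℕ → Letter → Word) : ℕ → ℕ → Word → Word
  | _, 0 => id
  | r, k + 1 => applySub (τ r) ∘ comps τ (r + 1) k

/-- `u` is a prefix of the infinite word `w`. -/
def IsPrefixOfInf (u : Word) (w : ℕ → Letter) : Prop :=
  ∀ (k : ℕ) (hk : k < u.length), u[k] = w k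

/-- `u` is a factor of the infinite word `w`. -/
def FactorOf (u : Word) (w : ℕ → Letter) : Prop :=
  ∃ i : ℕ, u = List.ofFn (fun j : Fin u.length => w (i + j))

/-- The extension set `E(u,w) = {(a,b) : a·u·b is a factor of w}`. -/
def ExtSet (u : Word) (w : ℕ → Letter) : Set (Letter × Letter) :=
  {p | FactorOf ([p.1] ++ u ++ [p.2]) w}

/-- A factor `u` of `w` is bispecial if both projections of `E(u,w)` have at
least two elements. -/
def Bispecial (u : Word) (w : ℕ → Letter) : Prop :=
  1 < (Prod.fst '' ExtSet u w).ncard ∧ 1 < (Prod.snd '' ExtSet u w).ncard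

/-- A sequence of substitutions is primitive if for every `r` there is `r' > r` such
that every letter occurs in every image `τ_r τ_{r+1} ⋯ τ_{r'-1}(a)`. -/
def Primitive (τ : ℕ → Letter → Word) : Prop :=
  ∀ r : ℕ, ∃ r', r < r' ∧ ∀ a b : Letter, b ∈ comps τ r (r' - r) [a]

lemma applySub_append (σ : Letter → Word) (u v : Word) :
    applySub σ (u ++ v) = applySub σ u ++ applySub σ v := by
  simp [applySub]

lemma comps_append (τ : ℕ → Letter → Word) (r k : ℕ) (u v : Word) :
    comps τ r k (u ++ v) = comps τ r k u ++ comps τ r k v := by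
  induction k generalizing r u v with
  | zero => rfl
  | succ k ih => simp [comps, ih, applySub_append]

lemma comps_add (τ : ℕ → Letter → Word) (r k l : ℕ) (u : Word) :
    comps τ r (k + l) u = comps τ r k (comps τ (r + k) l u) := by
  induction k generalizing r with
  | zero => simp [comps]
  | succ k ih =>
    have h : k + 1 + l = (k + l) + 1 := by omega
    rw [h]
    show applySub (τ r) (comps τ (r+1) (k+l) u) = applySub (τ r) (comps τ (r+1) k (comps τ (r + (k+1)) l u))
    rw [ih]
    have : r + 1 + k = r + (k + 1) := by omega
    rw [this]

lemma extset_pair (w : ℕ → Letter) (x y : Letter) :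
    (x,y) ∈ ExtSet [] w ↔ ∃ i, w i = x ∧ w (i+1) = y := by
  simp only [ExtSet, Set.mem_setOf_eq, FactorOf]
  constructor
  · rintro ⟨i, h⟩
    simp [List.ofFn_succ] at h
    exact ⟨i, h.1.symm, by simpa using h.2.symm⟩
  · rintro ⟨i, hx, hy⟩
    exact ⟨i, by simp [List.ofFn_succ, hx, hy]⟩

lemma pair_of_prefix {p : Word} {w : ℕ → Letter} (hp : IsPrefixOfInf p w) {i : ℕ} {x y : Letter}
    (hx : p[i]? = some x) (hy : p[i+1]? = some y) : (x,y) ∈ ExtSet [] w := by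
  have h1 : i + 1 < p.length := by
    by_contra h
    rw [List.getElem?_eq_none (by omega)] at hy
    cases hy
  have h0 : i < p.length := by omega
  rw [List.getElem?_eq_getElem h0] at hx
  rw [List.getElem?_eq_getElem h1] at hy
  refine (extset_pair w x y).mpr ⟨i, ?_, ?_⟩
  · rw [← hp i h0]; exact (Option.some.injEq _ _ ▸ hx)
  · rw [← hp (i+1) h1]; exact (Option.some.injEq _ _ ▸ hy)

lemma infix_pair {l : Word} {x y : Letter} (h : [x,y] <:+: l) :
    ∃ i, l[i]? = some x ∧ l[i+1]? = some y := by
  obtain ⟨s, t, rfl⟩ := h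
  rw [List.append_assoc]
  refine ⟨s.length, ?_, ?_⟩
  · rw [List.getElem?_append_right (by omega)]
    simp
  · rw [List.getElem?_append_right (by omega)]
    simp

lemma applySub_infix {σ : Letter → Word} {u v : Word} (h : u <:+: v) :
    applySub σ u <:+: applySub σ v := by
  obtain ⟨s, t, rfl⟩ := h
  exact ⟨applySub σ s, applySub σ t, by simp [applySub_append]⟩

lemma occ_helper {w : ℕ → Letter} {σ : Letter → Word} {u : Word} {x y : Letter}
    (hp : IsPrefixOfInf (applySub σ u) w)
    {c d : Letter} (hcd : [c,d] <:+: u) (hxy : [x,y] <:+: σ c ++ σ d) :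
    (x,y) ∈ ExtSet [] w := by
  have h1 : applySub σ [c,d] <:+: applySub σ u := applySub_infix hcd
  have h2 : [x,y] <:+: applySub σ u := by
    refine hxy.trans ?_
    simpa [applySub] using h1
  obtain ⟨i, hx, hy⟩ := infix_pair h2
  exact pair_of_prefix hp hx hy

lemma pair_infix_of_getElem {l : Word} {i : ℕ} {x y : Letter}
    (hx : l[i]? = some x) (hy : l[i+1]? = some y) : [x,y] <:+: l := by
  have h3 : i + 1 < l.length := by
    by_contra h
    rw [List.getElem?_eq_none (by omega)] at hy
    cases hy
  have h0 : i < l.length := by omega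
  rw [List.getElem?_eq_getElem h0, Option.some.injEq] at hx
  rw [List.getElem?_eq_getElem h3, Option.some.injEq] at hy
  refine ⟨l.take i, l.drop (i+2), ?_⟩
  rw [← hx, ← hy]
  conv_rhs => rw [← List.take_append_drop i l,
    ← List.getElem_cons_drop h0,
    ← List.getElem_cons_drop h3]
  simp

lemma pairs_applySub (σ : Letter → Word) (L : List (Letter × Letter))
    (h1 : ∀ c, σ c ≠ [])
    (h2 : ∀ c d x y : Letter, [x,y] <:+: σ c ++ σ d → (x,y) ∈ L) :
    ∀ (v : Word) (i : ℕ) (x y : Letter),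
      (applySub σ v)[i]? = some x → (applySub σ v)[i+1]? = some y → (x,y) ∈ L := by
  intro v
  induction v with
  | nil => intro i x y hx _; simp [applySub] at hx
  | cons c v ih =>
    cases v with
    | nil =>
      intro i x y hx hy
      have hx' : (σ c)[i]? = some x := by simpa [applySub] using hx
      have hy' : (σ c)[i+1]? = some y := by simpa [applySub] using hy
      exact h2 c c x y ((pair_infix_of_getElem hx' hy').trans
        ((σ c).prefix_append (σ c)).isInfix)
    | cons d v' =>
      intro i x y hx hy
      have hsplit : applySub σ (c :: d :: v') = (σ c ++ σ d) ++ applySub σ v' := by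
        simp [applySub]
      rw [hsplit] at hx hy
      by_cases hcase : i + 1 < (σ c ++ σ d).length
      · have h0 : i < (σ c ++ σ d).length := by omega
        rw [List.getElem?_append, if_pos h0] at hx
        rw [List.getElem?_append, if_pos hcase] at hy
        exact h2 c d x y (pair_infix_of_getElem hx hy)
      · have hd : 0 < (σ d).length := List.length_pos_iff.mpr (h1 d)
        have hge : (σ c).length ≤ i := by
          simp only [List.length_append] at hcase
          omega
        have hx' : (applySub σ (d :: v'))[i - (σ c).length]? = some x := by
          rw [← List.getElem?_append_right hge]
          rw [show σ c ++ applySub σ (d :: v') = (σ c ++ σ d) ++ applySub σ v' by simp [applySub]]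
          exact hx
        have hy' : (applySub σ (d :: v'))[(i - (σ c).length) + 1]? = some y := by
          have he : (i - (σ c).length) + 1 = (i + 1) - (σ c).length := by omega
          rw [he, ← List.getElem?_append_right (by omega)]
          rw [show σ c ++ applySub σ (d :: v') = (σ c ++ σ d) ++ applySub σ v' by simp [applySub]]
          exact hy
        exact ih _ x y hx' hy'

lemma suffix_prefix_infix {l1 l2 s1 s2 : Word} (h1 : s1 <:+ l1) (h2 : s2 <+: l2) :
    s1 ++ s2 <:+: l1 ++ l2 := by
  obtain ⟨t1, rfl⟩ := h1
  obtain ⟨t2, rfl⟩ := h2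
  exact ⟨t1, t2, by simp⟩

lemma exists_u (w : ℕ → Letter) (τ : ℕ → Letter → Word) (hprim : Primitive τ)
    (a : ℕ → Letter) (hpref : ∀ n, IsPrefixOfInf (comps τ 0 n [a n]) w) :
    ∃ u : Word, IsPrefixOfInf (applySub (τ 0) u) w ∧
      (∀ c : Letter, ∃ d, [c,d] <:+: u) ∧ (∀ d : Letter, ∃ c, [c,d] <:+: u) := by
  obtain ⟨r1, hr1, hA⟩ := hprim 1
  obtain ⟨r2, hr2, hB⟩ := hprim r1
  have hm0 : (0 : Letter) ∈ comps τ r1 (r2 - r1) [a r2] := hB (a r2) 0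
  have hm1 : (1 : Letter) ∈ comps τ r1 (r2 - r1) [a r2] := hB (a r2) 1
  have hum : comps τ 1 (r2 - 1) [a r2]
      = comps τ 1 (r1 - 1) (comps τ r1 (r2 - r1) [a r2]) := by
    conv_lhs => rw [show r2 - 1 = (r1 - 1) + (r2 - r1) by omega]
    rw [comps_add]
    congr 2
    omega
  obtain ⟨d1, d2, m'', hm⟩ : ∃ d1 d2 m'',
      comps τ r1 (r2 - r1) [a r2] = d1 :: d2 :: m'' := by
    rcases hmm : comps τ r1 (r2 - r1) [a r2] with _ | ⟨e, _ | ⟨f, rest⟩⟩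
    · rw [hmm] at hm0; simp at hm0
    · rw [hmm] at hm0 hm1; simp at hm0 hm1
      rw [← hm0] at hm1; exact absurd hm1 (by decide)
    · exact ⟨e, f, rest, rfl⟩
  rw [hm] at hum
  have hsplit : comps τ 1 (r2 - 1) [a r2]
      = comps τ 1 (r1 - 1) [d1] ++ (comps τ 1 (r1 - 1) [d2] ++ comps τ 1 (r1 - 1) m'') := by
    rw [hum, show (d1 :: d2 :: m'' : Word) = [d1] ++ ([d2] ++ m'') by rfl,
      comps_append, comps_append]
  refine ⟨comps τ 1 (r2 - 1) [a r2], ?_, ?_, ?_⟩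
  · have h : ∀ b : Word, comps τ 0 r2 b = applySub (τ 0) (comps τ 1 (r2 - 1) b) := by
      intro b
      conv_lhs => rw [show r2 = (r2 - 1) + 1 by omega]
      rfl
    rw [← h]; exact hpref r2
  · -- every letter has a successor
    intro c
    obtain ⟨s, t, hst⟩ := List.append_of_mem (hA d1 c)
    rcases hrest : t ++ (comps τ 1 (r1 - 1) [d2] ++ comps τ 1 (r1 - 1) m'') with _ | ⟨d, rest⟩
    · exfalso
      simp only [List.append_eq_nil_iff] at hrest
      have hne : (0 : Letter) ∈ comps τ 1 (r1 - 1) [d2] := hA d2 0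
      rw [hrest.2.1] at hne
      simp at hne
    · refine ⟨d, ?_⟩
      have hu : comps τ 1 (r2 - 1) [a r2]
          = (s ++ [c]) ++ (t ++ (comps τ 1 (r1 - 1) [d2] ++ comps τ 1 (r1 - 1) m'')) := by
        rw [hsplit, hst]; simp
      rw [hu, hrest]
      show ([c] ++ [d] : Word) <:+: (s ++ [c]) ++ ([d] ++ rest)
      exact suffix_prefix_infix ⟨s, rfl⟩ ⟨rest, rfl⟩
  · -- every letter has a predecessor
    intro d
    obtain ⟨s, t, hst⟩ := List.append_of_mem (hA d2 d)
    have hne : comps τ 1 (r1 - 1) [d1] ++ s ≠ [] := by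
      have h0 : (0 : Letter) ∈ comps τ 1 (r1 - 1) [d1] := hA d1 0
      intro h
      simp only [List.append_eq_nil_iff] at h
      rw [h.1] at h0; simp at h0
    obtain ⟨s', c, hs'⟩ := (List.eq_nil_or_concat _).resolve_left hne
    refine ⟨c, ?_⟩
    have hu : comps τ 1 (r2 - 1) [a r2]
        = (comps τ 1 (r1 - 1) [d1] ++ s) ++ ([d] ++ (t ++ comps τ 1 (r1 - 1) m'')) := by
      rw [hsplit, hst]; simp
    rw [hu, hs']
    show ([c] ++ [d] : Word) <:+: s'.concat c ++ ([d] ++ (t ++ comps τ 1 (r1 - 1) m''))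
    exact suffix_prefix_infix ⟨s', by simp [List.concat_eq_append]⟩
      ⟨t ++ comps τ 1 (r1 - 1) m'', rfl⟩

theorem stmt11 (w : ℕ → Letter) (τ : ℕ → Letter → Word)
    (hτ : ∀ n, τ n ∈ Cprime) (hprim : Primitive τ)
    (a : ℕ → Letter) (hpref : ∀ n, IsPrefixOfInf (comps τ 0 n [a n]) w)
    (hlen : Filter.Tendsto (fun n => (comps τ 0 n [a n]).length)
      Filter.atTop Filter.atTop) :
    (τ 0 = c11 → ExtSet [] w = {(0, 0), (0, 1), (0, 2), (1, 0), (2, 0)}) ∧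
    (τ 0 = c22 → ExtSet [] w = {(0, 2), (1, 2), (2, 0), (2, 1), (2, 2)}) ∧
    (τ 0 = c122 → ExtSet [] w = {(0, 1), (0, 2), (1, 0), (1, 1), (2, 1)}) ∧
    (τ 0 = c211 → ExtSet [] w = {(0, 2), (1, 0), (1, 1), (1, 2), (2, 1)}) ∧
    (τ 0 = c121 → ExtSet [] w = {(0, 1), (0, 2), (1, 0), (2, 0), (2, 1)}) ∧
    (τ 0 = c212 → ExtSet [] w = {(0, 2), (1, 0), (1, 2), (2, 0), (2, 1)}) := by
  obtain ⟨u, hp, hA, hB⟩ := exists_u w τ hprim a hpref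
  have K1 : ∀ x y : Letter, (x,y) ∈ ExtSet [] w → ∃ (v : Word) (i : ℕ),
      (applySub (τ 0) v)[i]? = some x ∧ (applySub (τ 0) v)[i+1]? = some y := by
    intro x y hxy
    obtain ⟨i, hx, hy⟩ := (extset_pair w x y).mp hxy
    obtain ⟨n, hn1, hn2⟩ :=
      ((hlen.eventually_ge_atTop (i+2)).and (Filter.eventually_ge_atTop 1)).exists
    have h : ∀ b : Word, comps τ 0 n b = applySub (τ 0) (comps τ 1 (n - 1) b) := by
      intro b
      conv_lhs => rw [show n = (n - 1) + 1 by omega]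
      rfl
    refine ⟨comps τ 1 (n-1) [a n], i, ?_, ?_⟩
    · rw [← h, List.getElem?_eq_getElem (by omega : i < (comps τ 0 n [a n]).length),
        hpref n i (by omega), hx]
    · rw [← h, List.getElem?_eq_getElem (by omega : i + 1 < (comps τ 0 n [a n]).length),
        hpref n (i+1) (by omega), hy]
  refine ⟨?_, ?_, ?_, ?_, ?_, ?_⟩
  · intro h0
    rw [h0] at hp
    ext ⟨x, y⟩
    constructor
    · intro hmem
      obtain ⟨v, i, hx, hy⟩ := K1 x y hmem
      rw [h0] at hx hy
      have hm := pairs_applySub c11 [((0:Letter),(0:Letter)),(0,1),(0,2),(1,0),(2,0)] (by decide) (by decide) v i x y hx hy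
      simpa using hm
    · intro hmem
      simp only [Set.mem_insert_iff, Set.mem_singleton_iff, Prod.mk.injEq] at hmem
      rcases hmem with ⟨rfl,rfl⟩|⟨rfl,rfl⟩|⟨rfl,rfl⟩|⟨rfl,rfl⟩|⟨rfl,rfl⟩ <;>
      first
        | (obtain ⟨d, hd⟩ := hA 0; refine occ_helper hp hd ?_; fin_cases d <;> decide)
        | (obtain ⟨d, hd⟩ := hA 1; refine occ_helper hp hd ?_; fin_cases d <;> decide)
        | (obtain ⟨d, hd⟩ := hA 2; refine occ_helper hp hd ?_; fin_cases d <;> decide)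
        | (obtain ⟨c, hc⟩ := hB 0; refine occ_helper hp hc ?_; fin_cases c <;> decide)
        | (obtain ⟨c, hc⟩ := hB 1; refine occ_helper hp hc ?_; fin_cases c <;> decide)
        | (obtain ⟨c, hc⟩ := hB 2; refine occ_helper hp hc ?_; fin_cases c <;> decide)
  · intro h0
    rw [h0] at hp
    ext ⟨x, y⟩
    constructor
    · intro hmem
      obtain ⟨v, i, hx, hy⟩ := K1 x y hmem
      rw [h0] at hx hy
      have hm := pairs_applySub c22 [((0:Letter),(2:Letter)),(1,2),(2,0),(2,1),(2,2)] (by decide) (by decide) v i x y hx hy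
      simpa using hm
    · intro hmem
      simp only [Set.mem_insert_iff, Set.mem_singleton_iff, Prod.mk.injEq] at hmem
      rcases hmem with ⟨rfl,rfl⟩|⟨rfl,rfl⟩|⟨rfl,rfl⟩|⟨rfl,rfl⟩|⟨rfl,rfl⟩ <;>
      first
        | (obtain ⟨d, hd⟩ := hA 0; refine occ_helper hp hd ?_; fin_cases d <;> decide)
        | (obtain ⟨d, hd⟩ := hA 1; refine occ_helper hp hd ?_; fin_cases d <;> decide)
        | (obtain ⟨d, hd⟩ := hA 2; refine occ_helper hp hd ?_; fin_cases d <;> decide)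
        | (obtain ⟨c, hc⟩ := hB 0; refine occ_helper hp hc ?_; fin_cases c <;> decide)
        | (obtain ⟨c, hc⟩ := hB 1; refine occ_helper hp hc ?_; fin_cases c <;> decide)
        | (obtain ⟨c, hc⟩ := hB 2; refine occ_helper hp hc ?_; fin_cases c <;> decide)
  · intro h0
    rw [h0] at hp
    ext ⟨x, y⟩
    constructor
    · intro hmem
      obtain ⟨v, i, hx, hy⟩ := K1 x y hmem
      rw [h0] at hx hy
      have hm := pairs_applySub c122 [((0:Letter),(1:Letter)),(0,2),(1,0),(1,1),(2,1)] (by decide) (by decide) v i x y hx hy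
      simpa using hm
    · intro hmem
      simp only [Set.mem_insert_iff, Set.mem_singleton_iff, Prod.mk.injEq] at hmem
      rcases hmem with ⟨rfl,rfl⟩|⟨rfl,rfl⟩|⟨rfl,rfl⟩|⟨rfl,rfl⟩|⟨rfl,rfl⟩ <;>
      first
        | (obtain ⟨d, hd⟩ := hA 0; refine occ_helper hp hd ?_; fin_cases d <;> decide)
        | (obtain ⟨d, hd⟩ := hA 1; refine occ_helper hp hd ?_; fin_cases d <;> decide)
        | (obtain ⟨d, hd⟩ := hA 2; refine occ_helper hp hd ?_; fin_cases d <;> decide)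
        | (obtain ⟨c, hc⟩ := hB 0; refine occ_helper hp hc ?_; fin_cases c <;> decide)
        | (obtain ⟨c, hc⟩ := hB 1; refine occ_helper hp hc ?_; fin_cases c <;> decide)
        | (obtain ⟨c, hc⟩ := hB 2; refine occ_helper hp hc ?_; fin_cases c <;> decide)
  · intro h0
    rw [h0] at hp
    ext ⟨x, y⟩
    constructor
    · intro hmem
      obtain ⟨v, i, hx, hy⟩ := K1 x y hmem
      rw [h0] at hx hy
      have hm := pairs_applySub c211 [((0:Letter),(2:Letter)),(1,0),(1,1),(1,2),(2,1)] (by decide) (by decide) v i x y hx hy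
      simpa using hm
    · intro hmem
      simp only [Set.mem_insert_iff, Set.mem_singleton_iff, Prod.mk.injEq] at hmem
      rcases hmem with ⟨rfl,rfl⟩|⟨rfl,rfl⟩|⟨rfl,rfl⟩|⟨rfl,rfl⟩|⟨rfl,rfl⟩ <;>
      first
        | (obtain ⟨d, hd⟩ := hA 0; refine occ_helper hp hd ?_; fin_cases d <;> decide)
        | (obtain ⟨d, hd⟩ := hA 1; refine occ_helper hp hd ?_; fin_cases d <;> decide)
        | (obtain ⟨d, hd⟩ := hA 2; refine occ_helper hp hd ?_; fin_cases d <;> decide)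
        | (obtain ⟨c, hc⟩ := hB 0; refine occ_helper hp hc ?_; fin_cases c <;> decide)
        | (obtain ⟨c, hc⟩ := hB 1; refine occ_helper hp hc ?_; fin_cases c <;> decide)
        | (obtain ⟨c, hc⟩ := hB 2; refine occ_helper hp hc ?_; fin_cases c <;> decide)
  · intro h0
    rw [h0] at hp
    ext ⟨x, y⟩
    constructor
    · intro hmem
      obtain ⟨v, i, hx, hy⟩ := K1 x y hmem
      rw [h0] at hx hy
      have hm := pairs_applySub c121 [((0:Letter),(1:Letter)),(0,2),(1,0),(2,0),(2,1)] (by decide) (by decide) v i x y hx hy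
      simpa using hm
    · intro hmem
      simp only [Set.mem_insert_iff, Set.mem_singleton_iff, Prod.mk.injEq] at hmem
      rcases hmem with ⟨rfl,rfl⟩|⟨rfl,rfl⟩|⟨rfl,rfl⟩|⟨rfl,rfl⟩|⟨rfl,rfl⟩ <;>
      first
        | (obtain ⟨d, hd⟩ := hA 0; refine occ_helper hp hd ?_; fin_cases d <;> decide)
        | (obtain ⟨d, hd⟩ := hA 1; refine occ_helper hp hd ?_; fin_cases d <;> decide)
        | (obtain ⟨d, hd⟩ := hA 2; refine occ_helper hp hd ?_; fin_cases d <;> decide)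
        | (obtain ⟨c, hc⟩ := hB 0; refine occ_helper hp hc ?_; fin_cases c <;> decide)
        | (obtain ⟨c, hc⟩ := hB 1; refine occ_helper hp hc ?_; fin_cases c <;> decide)
        | (obtain ⟨c, hc⟩ := hB 2; refine occ_helper hp hc ?_; fin_cases c <;> decide)
  · intro h0
    rw [h0] at hp
    ext ⟨x, y⟩
    constructor
    · intro hmem
      obtain ⟨v, i, hx, hy⟩ := K1 x y hmem
      rw [h0] at hx hy
      have hm := pairs_applySub c212 [((0:Letter),(2:Letter)),(1,0),(1,2),(2,0),(2,1)] (by decide) (by decide) v i x y hx hy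
      simpa using hm
    · intro hmem
      simp only [Set.mem_insert_iff, Set.mem_singleton_iff, Prod.mk.injEq] at hmem
      rcases hmem with ⟨rfl,rfl⟩|⟨rfl,rfl⟩|⟨rfl,rfl⟩|⟨rfl,rfl⟩|⟨rfl,rfl⟩ <;>
      first
        | (obtain ⟨d, hd⟩ := hA 0; refine occ_helper hp hd ?_; fin_cases d <;> decide)
        | (obtain ⟨d, hd⟩ := hA 1; refine occ_helper hp hd ?_; fin_cases d <;> decide)
        | (obtain ⟨d, hd⟩ := hA 2; refine occ_helper hp hd ?_; fin_cases d <;> decide)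
        | (obtain ⟨c, hc⟩ := hB 0; refine occ_helper hp hc ?_; fin_cases c <;> decide)
        | (obtain ⟨c, hc⟩ := hB 1; refine occ_helper hp hc ?_; fin_cases c <;> decide)
        | (obtain ⟨c, hc⟩ := hB 2; refine occ_helper hp hc ?_; fin_cases c <;> decide)
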